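/- If Ω: ℕ × ℕ → ℕ satisfies Ω(K,1) = 2 for all K ≥ 2, Ω(2,C) = C² − C + 2 for all C ≥ 1, and Ω(K,C) = Ω(K,C−1) + Ω(K−1,C−1) for K ≥ 3, C ≥ 2, then Ω(K,C) ≤ 2^C for all K ≥ 2, C ≥ 1, with equality iff C ≤ K + 1. -/
import Mathlib

lemma quad_lt_pow : ∀ C : ℕ, 4 ≤ C → C ^ 2 - C + 2 < 2 ^ C := by
  intro C hC
  induction C, hC using Nat.le_induction with
  | base => norm_num
  | succ n hn ih =>
    have h1 : n ≤ n ^ 2 := by nlinarith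
    have h2 : (n + 1) ^ 2 - (n + 1) + 2 = n ^ 2 + n + 2 := by
      have : (n + 1) ^ 2 = n ^ 2 + 2 * n + 1 := by ring
      omega
    have h3 : n ^ 2 + 2 < 2 ^ n + n := by omega
    have hp : (2:ℕ) ^ (n + 1) = 2 * 2 ^ n := by ring
    rw [h2, hp]
    have h4 : 4 * n ≤ n * n := Nat.mul_le_mul_right n hn
    nlinarith [h3, h4]

theorem omega_le_pow_iff (Ω : ℕ → ℕ → ℕ)
    (h1 : ∀ K, 2 ≤ K → Ω K 1 = 2)
    (h2 : ∀ C, 1 ≤ C → Ω 2 C = C ^ 2 - C + 2)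
    (hrec : ∀ K C, 3 ≤ K → 2 ≤ C → Ω K C = Ω K (C - 1) + Ω (K - 1) (C - 1)) :
    ∀ K C, 2 ≤ K → 1 ≤ C →
      Ω K C ≤ 2 ^ C ∧ (Ω K C = 2 ^ C ↔ C ≤ K + 1) := by
  intro K C hK hC
  induction C, hC using Nat.le_induction generalizing K with
  | base =>
    rw [h1 K hK]
    constructor
    · norm_num
    · constructor <;> intro _ <;> omega
  | succ n hn ih =>
    rcases Nat.lt_or_ge K 3 with hK3 | hK3
    · -- K = 2
      have hK2 : K = 2 := by omega
      subst hK2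
      rw [h2 (n + 1) (by omega)]
      rcases Nat.lt_or_ge n 3 with hn3 | hn3
      · interval_cases n <;> norm_num
      · have := quad_lt_pow (n + 1) (by omega)
        constructor
        · omega
        · constructor <;> intro h <;> omega
    · -- K ≥ 3
      have hrw : Ω K (n + 1) = Ω K n + Ω (K - 1) n := by
        have := hrec K (n + 1) hK3 (by omega)
        simpa using this
      obtain ⟨ha1, ha2⟩ := ih K hK
      obtain ⟨hb1, hb2⟩ := ih (K - 1) (by omega)
      have hpow : 2 ^ (n + 1) = 2 ^ n + 2 ^ n := by ring
      rw [hrw, hpow]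
      constructor
      · omega
      · constructor
        · intro h
          have hKa : n ≤ K - 1 + 1 := hb2.mp (by omega)
          omega
        · intro h
          have e1 : Ω K n = 2 ^ n := ha2.mpr (by omega)
          have e2 : Ω (K - 1) n = 2 ^ n := hb2.mpr (by omega)
          omega
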